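/- Let Z be a twisted Hilbert space satisfying the Principle of Small Perturbations. Then the natural quotient map Q : Z → ℓ₂, Q(x,y) = y, is strictly singular: there is no infinite-dimensional closed subspace W of Z on which Q is an isomorphism. -/

import Mathlib

/-- The separable Hilbert space ℓ₂ of real sequences. -/
noncomputable abbrev Ell2 : Type := lp (fun _ : ℕ => ℝ) 2

/-- A sequence in a normed space is equivalent to the unit vector basis of ℓ₂. -/
def l2Equiv {Z : Type*} [NormedAddCommGroup Z] [NormedSpace ℝ Z] (w : ℕ → Z) : Prop :=
  ∃ c C : ℝ, 0 < c ∧ ∀ (s : Finset ℕ) (a : ℕ → ℝ),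
    c * Real.sqrt (∑ j ∈ s, (a j)^2) ≤ ‖∑ j ∈ s, a j • w j‖ ∧
    ‖∑ j ∈ s, a j • w j‖ ≤ C * Real.sqrt (∑ j ∈ s, (a j)^2)

/-- The Principle of Small Perturbations for a twisted Hilbert space `Z` with quotient
map `Q`: every sequence equivalent to the unit vector basis of ℓ₂ has a subsequence which
is a small perturbation of norm-one elements of `ker Q` (the vectors of the form `(y,0)`). -/
def PSP {Z : Type*} [NormedAddCommGroup Z] [NormedSpace ℝ Z]
    (Q : Z →L[ℝ] Ell2) : Prop :=
  ∀ w : ℕ → Z, l2Equiv w → ∃ k : ℕ → ℕ, StrictMono k ∧ ∃ y : ℕ → Z,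
    (∀ j, Q (y j) = 0) ∧ (∀ j, ‖y j‖ = 1) ∧ ∀ j, ‖w (k j) - y j‖ ≤ (2:ℝ)^(-(j:ℤ))

theorem stmt10 {Z : Type*} [NormedAddCommGroup Z] [NormedSpace ℝ Z] [CompleteSpace Z]
    (Q : Z →L[ℝ] Ell2)
    -- twisted Hilbert structure: 0 → ℓ₂ → Z → ℓ₂ → 0
    (jmap : Ell2 →L[ℝ] Z) (hjlow : ∃ c > (0:ℝ), ∀ v, c * ‖v‖ ≤ ‖jmap v‖)
    (hrange : LinearMap.range (jmap : Ell2 →ₗ[ℝ] Z) = LinearMap.ker (Q : Z →ₗ[ℝ] Ell2))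
    (hsurj : Function.Surjective Q)
    -- every infinite-dimensional closed subspace of a twisted Hilbert space contains a
    -- sequence equivalent to the unit vector basis of ℓ₂
    (hsub : ∀ W : Submodule ℝ Z, IsClosed (W : Set Z) → ¬ FiniteDimensional ℝ W →
      ∃ w : ℕ → Z, (∀ j, w j ∈ W) ∧ l2Equiv w)
    (hpsp : PSP Q) :
    -- Q is strictly singular: it is an isomorphism on no infinite-dimensional closed subspace
    ∀ W : Submodule ℝ Z, IsClosed (W : Set Z) → ¬ FiniteDimensional ℝ W →
      ¬ ∃ c > (0:ℝ), ∀ z ∈ W, c * ‖z‖ ≤ ‖Q z‖ := by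
  rintro W hWc hWfd ⟨c, hc, hQlow⟩
  obtain ⟨w, hwW, hwE⟩ := hsub W hWc hWfd
  obtain ⟨k, hk, y, hyker, hynorm, hclose⟩ := hpsp w hwE
  have hQnn : (0:ℝ) ≤ ‖Q‖ := norm_nonneg _
  have hden : (0:ℝ) < 2 * (‖Q‖ + 1) := by positivity
  set ε : ℝ := min (1/2) (c / (2 * (‖Q‖ + 1))) with hε
  have hεpos : 0 < ε := lt_min (by norm_num) (div_pos hc hden)
  obtain ⟨j, hj⟩ := exists_pow_lt_of_lt_one hεpos (by norm_num : (1/2:ℝ) < 1)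
  have ht : (2:ℝ)^(-(j:ℤ)) < ε := by
    have : (2:ℝ)^(-(j:ℤ)) = (1/2:ℝ)^j := by
      rw [zpow_neg, zpow_natCast, ← inv_pow]; norm_num
    rw [this]; exact hj
  set t : ℝ := (2:ℝ)^(-(j:ℤ)) with hts
  have htpos : 0 < t := by positivity
  have ht1 : t < 1/2 := lt_of_lt_of_le ht (min_le_left _ _)
  have ht2 : t < c / (2 * (‖Q‖ + 1)) := lt_of_lt_of_le ht (min_le_right _ _)
  have h1 : Q (w (k j)) = Q (w (k j) - y j) := by
    rw [map_sub, hyker j, sub_zero]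
  have h2 : ‖Q (w (k j))‖ ≤ ‖Q‖ * t := by
    rw [h1]
    calc ‖Q (w (k j) - y j)‖ ≤ ‖Q‖ * ‖w (k j) - y j‖ := Q.le_opNorm _
      _ ≤ ‖Q‖ * t := by
          exact mul_le_mul_of_nonneg_left (hclose j) hQnn
  have h3 : 1 - t ≤ ‖w (k j)‖ := by
    have := norm_sub_norm_le (y j) (w (k j))
    rw [hynorm j, ← norm_neg (y j - w (k j))] at this
    simp only [neg_sub] at this
    linarith [hclose j]
  have h4 : c * ‖w (k j)‖ ≤ ‖Q (w (k j))‖ := hQlow _ (hwW (k j))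
  have h5 : c * (1 - t) ≤ ‖Q‖ * t := by
    calc c * (1 - t) ≤ c * ‖w (k j)‖ := by nlinarith
      _ ≤ ‖Q (w (k j))‖ := h4
      _ ≤ ‖Q‖ * t := h2
  have h6 : t * (2 * (‖Q‖ + 1)) < c := (lt_div_iff₀ hden).mp ht2
  nlinarith
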